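/- Every n-vertex graph with at least n+1 edges (an excess-1 graph) contains a cycle of length at most 2n/3 + 1. -/

import Mathlib

open SimpleGraph

namespace ExcessOneAux

variable {V : Type} {G : SimpleGraph V}


variable {V : Type} {G : SimpleGraph V}

/-- A walk from a vertex to itself with nodup support is nil. -/
lemma loop_eq_nil {a : V} (w : G.Walk a a) (h : w.support.Nodup) : w = Walk.nil := by
  cases w with
  | nil => rfl
  | cons h' w' =>
    exfalso
    simp only [Walk.support_cons, List.nodup_cons] at h
    exact h.1 w'.end_mem_support

/-- The endpoint of a nontrivial closed walk is in the tail of its support. -/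
lemma end_mem_tail {a : V} (w : G.Walk a a) (hw : ¬ w.Nil) : a ∈ w.support.tail := by
  cases w with
  | nil => simp at hw
  | cons h' w' =>
    simp only [Walk.support_cons, List.tail_cons]
    exact w'.end_mem_support

lemma mem_support_iff_mem_tail {a v : V} (w : G.Walk a a) (hw : ¬ w.Nil) :
    v ∈ w.support ↔ v ∈ w.support.tail := by
  constructor
  · intro hv
    rw [Walk.support_eq_cons] at hv
    rcases List.mem_cons.mp hv with rfl | hv
    · exact end_mem_tail w hw
    · exact hv
  · intro hv
    exact List.mem_of_mem_tail hv

/-- First visit decomposition of a walk with respect to a predicate holding at the end. -/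
lemma exists_firstVisit (p : V → Prop) :
    ∀ {a b : V} (w : G.Walk a b), p b →
    ∃ (y : V) (A : G.Walk a y) (R : G.Walk y b), p y ∧ w = A.append R ∧
      ∀ z ∈ A.support, p z → z = y := by
  intro a b w
  induction w with
  | nil =>
    intro hb
    exact ⟨_, Walk.nil, Walk.nil, hb, rfl, by simp⟩
  | @cons u c b h w' ih =>
    intro hb
    by_cases hu : p u
    · exact ⟨u, Walk.nil, Walk.cons h w', hu, rfl, by simp⟩
    · obtain ⟨y, A, R, hy, hEq, hA⟩ := ih hb
      refine ⟨y, Walk.cons h A, R, hy, by rw [Walk.cons_append, hEq], ?_⟩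
      intro z hz hpz
      simp only [Walk.support_cons, List.mem_cons] at hz
      rcases hz with rfl | hz
      · exact absurd hpz hu
      · exact hA z hz hpz

/-- Edges of a walk all of whose support vertices satisfying `S` equal the endpoint avoid `F`,
provided `F`-edges have both endpoints in `S` and are non-diagonal. -/
lemma edges_avoid {S : Set V} {F : Set (Sym2 V)}
    (hFS : ∀ e ∈ F, ∀ v, v ∈ e → v ∈ S) (hFd : ∀ e ∈ F, ¬ e.IsDiag)
    {a b : V} (A : G.Walk a b) (hA : ∀ z ∈ A.support, z ∈ S → z = b) :
    ∀ e ∈ A.edges, e ∉ F := by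
  intro e he hf
  induction e with
  | h α β =>
    have hα : α ∈ A.support := A.fst_mem_support_of_mem_edges he
    have hβ : β ∈ A.support := A.snd_mem_support_of_mem_edges he
    have hαS : α ∈ S := hFS _ hf α (by simp)
    have hβS : β ∈ S := hFS _ hf β (by simp)
    have h1 : α = b := hA _ hα hαS
    have h2 : β = b := hA _ hβ hβS
    apply hFd _ hf
    rw [h1, h2]
    exact Sym2.isDiag_iff_proj_eq |>.mpr rfl




lemma mk_surjective (G : SimpleGraph V) :
    Function.Surjective G.connectedComponentMk :=
  Quot.mk_surjective

/-- A forest on a finite vertex set satisfies `#edges + #components ≤ #vertices`. -/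
lemma forest_count [Finite V] :
    ∀ (n : ℕ) (G : SimpleGraph V), G.edgeSet.ncard = n → G.IsAcyclic →
      n + Nat.card G.ConnectedComponent ≤ Nat.card V := by
  intro n
  induction n using Nat.strong_induction_on with
  | _ n ih =>
    intro G hn hG
    rcases Nat.eq_zero_or_pos n with rfl | hpos
    · simpa using Nat.card_le_card_of_surjective _ (mk_surjective G)
    · -- pick an edge
      have hne : G.edgeSet.Nonempty := by
        rw [← Set.ncard_pos (Set.toFinite _)] at *
        omega
      obtain ⟨e, he⟩ := hne
      induction e with
      | h a b =>
      have hadj : G.Adj a b := he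
      have hbridge : G.IsBridge s(a, b) :=
        (isAcyclic_iff_forall_adj_isBridge.mp hG) hadj
      set G' := G.deleteEdges {s(a, b)} with hG'def
      have hle : G' ≤ G := G.deleteEdges_le _
      have hG'ac : G'.IsAcyclic := fun v c hc => hG (c.mapLe hle) (hc.mapLe hle)
      have hes : G'.edgeSet = G.edgeSet \ {s(a, b)} := G.edgeSet_deleteEdges _
      have hcard : G'.edgeSet.ncard = n - 1 := by
        rw [hes, Set.ncard_diff_singleton_of_mem he, hn]
      -- components
      have hcomp : Nat.card G.ConnectedComponent < Nat.card G'.ConnectedComponent := by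
        have : Finite G'.ConnectedComponent := Quot.finite _
        have : Finite G.ConnectedComponent := Quot.finite _
        letI : Fintype G'.ConnectedComponent := Fintype.ofFinite _
        letI : Fintype G.ConnectedComponent := Fintype.ofFinite _
        rw [Nat.card_eq_fintype_card, Nat.card_eq_fintype_card]
        apply Fintype.card_lt_of_surjective_not_injective
          (ConnectedComponent.map (Hom.ofLE hle))
        · intro c
          induction c using ConnectedComponent.ind with
          | _ v => exact ⟨G'.connectedComponentMk v, rfl⟩
        · intro hinj
          have h1 : (G'.connectedComponentMk a).map (Hom.ofLE hle)
              = (G'.connectedComponentMk b).map (Hom.ofLE hle) := by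
            simp only [ConnectedComponent.map_mk]
            exact ConnectedComponent.sound hadj.reachable
          have h2 := hinj h1
          rw [ConnectedComponent.eq] at h2
          exact hbridge h2
      have hrec := ih (n - 1) (by omega) G' hcard hG'ac
      omega

/-- A graph on a nonempty finite vertex set with at least as many edges as vertices
is not acyclic. -/
lemma not_acyclic [Finite V] [Nonempty V] (G : SimpleGraph V)
    (h : Nat.card V ≤ G.edgeSet.ncard) : ¬ G.IsAcyclic := by
  intro hG
  have := forest_count G.edgeSet.ncard G rfl hG
  have hpos : 0 < Nat.card G.ConnectedComponent := by
    have : Finite G.ConnectedComponent := Quot.finite _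
    have : Nonempty G.ConnectedComponent := ⟨G.connectedComponentMk (Classical.arbitrary V)⟩
    exact Nat.card_pos
  omega




/-- Extract a "good" segment: a nontrivial path between two distinct `S`-vertices,
internally avoiding `S`, with all edges outside `F`. -/
lemma segment {S : Set V} {F : Set (Sym2 V)}
    (hFS : ∀ e ∈ F, ∀ v, v ∈ e → v ∈ S) (hFd : ∀ e ∈ F, ¬ e.IsDiag) :
    ∀ {x s' : V} (w : G.Walk x s'), w.IsPath → x ∈ S → s' ∈ S →
      (∃ e ∈ w.edges, e ∉ F) →
      ∃ (x' y' : V) (P : G.Walk x' y'), x' ∈ S ∧ y' ∈ S ∧ x' ≠ y' ∧ P.IsPath ∧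
        1 ≤ P.length ∧ (∀ z ∈ P.support, z ∈ S → z = x' ∨ z = y') ∧
        (∀ e ∈ P.edges, e ∉ F) := by
  intro x s' w
  induction w with
  | nil =>
    intro _ _ _ hbad
    simp at hbad
  | @cons u c s' h w' ih =>
    intro hw hu hs' hbad
    have hw' : w'.IsPath := hw.of_cons
    obtain ⟨y, A, R, hyS, hEq, hA⟩ := exists_firstVisit (· ∈ S) w' hs'
    have hApath : A.IsPath := by
      have h2 := hw'
      rw [hEq] at h2
      exact h2.of_append_left
    by_cases hf : s(u, c) ∈ F
    · -- bad first edge: it lies in F, so c ∈ S and we can recurse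
      have hcS : c ∈ S := hFS _ hf c (by simp)
      have hcy : c = y := hA c A.start_mem_support hcS
      subst hcy
      have hAnil : A = Walk.nil := loop_eq_nil A hApath.support_nodup
      have hw'R : w' = R := by rw [hEq, hAnil]; rfl
      apply ih hw' hcS hs'
      obtain ⟨e, heq, heF⟩ := hbad
      rw [Walk.edges_cons, List.mem_cons] at heq
      rcases heq with rfl | heq
      · exact absurd hf heF
      · exact ⟨e, heq, heF⟩
    · -- good segment: cons h A
      have hAsub : A.support ⊆ w'.support := by
        rw [hEq]; intro z hz; exact Walk.subset_support_append_left _ _ hz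
      have hyA : y ∈ A.support := A.end_mem_support
      have hu_not : u ∉ w'.support := ((Walk.cons_isPath_iff h w').mp hw).2
      have huy : u ≠ y := fun hh => hu_not (hh ▸ hAsub hyA)
      refine ⟨u, y, Walk.cons h A, hu, hyS, huy, ?_, by simp, ?_, ?_⟩
      · exact hApath.cons (fun hmem => hu_not (hAsub hmem))
      · intro z hz hzS
        simp only [Walk.support_cons, List.mem_cons] at hz
        rcases hz with rfl | hz
        · exact Or.inl rfl
        · exact Or.inr (hA z hz hzS)
      · intro e he
        rw [Walk.edges_cons, List.mem_cons] at he
        rcases he with rfl | he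
        · exact hf
        · exact edges_avoid hFS hFd A hA e he




/-- The theta bound: a shortest cycle `C` together with an `S`-avoiding handle path `P`
forces `3 * C.length ≤ 2 * |V| + 2`. -/
lemma theta [Fintype V] [DecidableEq V] {c0 : V} {C : G.Walk c0 c0} (hC : C.IsCycle)
    (hmin : ∀ (a : V) (w : G.Walk a a), w.IsCycle → C.length ≤ w.length)
    {x y : V} (P : G.Walk x y) (hx : x ∈ C.support) (hy : y ∈ C.support) (hxy : x ≠ y)
    (hP : P.IsPath) (hPlen : 1 ≤ P.length)
    (hint : ∀ z ∈ P.support, z ∈ C.support → z = x ∨ z = y)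
    (hPF : ∀ e ∈ P.edges, e ∉ C.edges) :
    3 * C.length ≤ 2 * Fintype.card V + 2 := by
  set C1 := C.rotate x hx with hC1def
  have hC1 : C1.IsCycle := hC.rotate hx
  have hsupp : ∀ v, v ∈ C1.support ↔ v ∈ C.support := by
    intro v
    rw [mem_support_iff_mem_tail _ hC1.not_nil, mem_support_iff_mem_tail _ hC.not_nil]
    exact (Walk.support_rotate C x hx).perm.mem_iff
  have hedge : ∀ e, e ∈ C1.edges ↔ e ∈ C.edges :=
    fun e => (Walk.rotate_edges C x hx).perm.mem_iff
  have hC1len : C1.length = C.length := by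
    rw [hC1def, Walk.rotate, Walk.length_append, Nat.add_comm, ← Walk.length_append,
      Walk.take_spec]
  have hyC1 : y ∈ C1.support := (hsupp y).mpr hy
  set A1 := C1.takeUntil y hyC1 with hA1def
  set A2 := C1.dropUntil y hyC1 with hA2def
  have hspec : A1.append A2 = C1 := C1.take_spec hyC1
  have hlensum : A1.length + A2.length = C.length := by
    rw [← hC1len, ← hspec, Walk.length_append]
  have a1pos : 1 ≤ A1.length := by
    rcases Nat.eq_zero_or_pos A1.length with h0 | h
    · exact absurd (Walk.eq_of_length_eq_zero h0) hxy
    · exact h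
  have a2pos : 1 ≤ A2.length := by
    rcases Nat.eq_zero_or_pos A2.length with h0 | h
    · exact absurd (Walk.eq_of_length_eq_zero h0) hxy.symm
    · exact h
  -- support splitting
  have hsup1 : C1.support = A1.support ++ A2.support.tail := by
    rw [← hspec, Walk.support_append]
  have htail_eq : C1.support.tail = A1.support.tail ++ A2.support.tail := by
    calc C1.support.tail = (A1.support ++ A2.support.tail).tail := by rw [hsup1]
      _ = ((x :: A1.support.tail) ++ A2.support.tail).tail := by rw [← A1.support_eq_cons]
      _ = A1.support.tail ++ A2.support.tail := by rw [List.cons_append, List.tail_cons]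
  have hnd := hC1.support_nodup
  rw [htail_eq, List.nodup_append] at hnd
  obtain ⟨hA1t, hA2t, hdisjt⟩ := hnd
  have hyA1t : y ∈ A1.support.tail := by
    have h1 : y ∈ A1.support := A1.end_mem_support
    rw [A1.support_eq_cons, List.mem_cons] at h1
    rcases h1 with h1 | h1
    · exact absurd h1.symm hxy
    · exact h1
  have hxA2t : x ∈ A2.support.tail := by
    have h1 : x ∈ A2.support := A2.end_mem_support
    rw [A2.support_eq_cons, List.mem_cons] at h1
    rcases h1 with h1 | h1
    · exact absurd h1 hxy
    · exact h1
  have hxA1t : x ∉ A1.support.tail := fun hmem => hdisjt _ hmem _ hxA2t rfl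
  have hyA2t : y ∉ A2.support.tail := fun hmem => hdisjt _ hyA1t _ hmem rfl
  have hA1path : A1.IsPath := by
    apply Walk.IsPath.mk'
    rw [A1.support_eq_cons]
    exact List.nodup_cons.mpr ⟨hxA1t, hA1t⟩
  have hA2path : A2.IsPath := by
    apply Walk.IsPath.mk'
    rw [A2.support_eq_cons]
    exact List.nodup_cons.mpr ⟨hyA2t, hA2t⟩
  -- edge splitting
  have hedges1 : C1.edges = A1.edges ++ A2.edges := by
    rw [← hspec, Walk.edges_append]
  have hnde := hC1.isCircuit.isTrail.edges_nodup
  rw [hedges1, List.nodup_append] at hnde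
  obtain ⟨hA1e, hA2e, hdisje⟩ := hnde
  have hA1eC : ∀ e ∈ A1.edges, e ∈ C.edges := by
    intro e he
    exact (hedge e).mp (by rw [hedges1]; exact List.mem_append_left _ he)
  have hA2eC : ∀ e ∈ A2.edges, e ∈ C.edges := by
    intro e he
    exact (hedge e).mp (by rw [hedges1]; exact List.mem_append_right _ he)
  have hA1sub : ∀ z ∈ A1.support, z ∈ C.support := by
    intro z hz
    exact (hsupp z).mp (Walk.support_takeUntil_subset _ hyC1 hz)
  have hA2sub : ∀ z ∈ A2.support, z ∈ C.support := by
    intro z hz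
    exact (hsupp z).mp (Walk.support_dropUntil_subset _ hyC1 hz)
  have hPnd := hP.support_nodup
  have hxPt : x ∉ P.support.tail := by
    rw [P.support_eq_cons, List.nodup_cons] at hPnd
    exact hPnd.1
  have hPt : P.support.tail.Nodup := by
    rw [P.support_eq_cons, List.nodup_cons] at hPnd
    exact hPnd.2
  -- first cycle W1 = A1 ++ P.reverse
  have hPrev : P.reverse.IsPath := hP.reverse
  have hyPrevt : y ∉ P.reverse.support.tail := by
    have := hPrev.support_nodup
    rw [P.reverse.support_eq_cons, List.nodup_cons] at this
    exact this.1
  have hPrevt : P.reverse.support.tail.Nodup := by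
    have := hPrev.support_nodup
    rw [P.reverse.support_eq_cons, List.nodup_cons] at this
    exact this.2
  have hPrevmem : ∀ z, z ∈ P.reverse.support → z ∈ P.support := by
    intro z hz
    rw [Walk.support_reverse, List.mem_reverse] at hz
    exact hz
  set W1 := A1.append P.reverse with hW1def
  have hW1len : W1.length = A1.length + P.length := by
    rw [hW1def, Walk.length_append, Walk.length_reverse]
  have hW1 : W1.IsCycle := by
    rw [Walk.isCycle_def]
    refine ⟨⟨?_⟩, ?_, ?_⟩
    · rw [hW1def, Walk.edges_append, Walk.edges_reverse]
      rw [List.nodup_append]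
      refine ⟨hA1e, List.nodup_reverse.mpr hP.isTrail.edges_nodup, ?_⟩
      intro e he1 e' he2 hee; subst hee
      rw [List.mem_reverse] at he2
      exact hPF e he2 (hA1eC e he1)
    · intro hnil
      have : W1.length = 0 := by rw [hnil]; rfl
      omega
    · have hW1tail : W1.support.tail = A1.support.tail ++ P.reverse.support.tail := by
        calc W1.support.tail = (A1.support ++ P.reverse.support.tail).tail := by
              rw [hW1def, Walk.support_append]
          _ = ((x :: A1.support.tail) ++ P.reverse.support.tail).tail := by
              rw [← A1.support_eq_cons]
          _ = A1.support.tail ++ P.reverse.support.tail := by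
              rw [List.cons_append, List.tail_cons]
      rw [hW1tail, List.nodup_append]
      refine ⟨hA1t, hPrevt, ?_⟩
      intro z hz1 z' hz2 hzz; subst hzz
      have hzC : z ∈ C.support := hA1sub z (List.mem_of_mem_tail hz1)
      have hzP : z ∈ P.support := hPrevmem z (List.mem_of_mem_tail hz2)
      rcases hint z hzP hzC with rfl | rfl
      · exact hxA1t hz1
      · exact hyPrevt hz2
  have h1 : C.length ≤ A1.length + P.length := by
    have := hmin x W1 hW1
    omega
  -- second cycle W2 = P ++ A2
  set W2 := P.append A2 with hW2def
  have hW2len : W2.length = P.length + A2.length := by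
    rw [hW2def, Walk.length_append]
  have hW2 : W2.IsCycle := by
    rw [Walk.isCycle_def]
    refine ⟨⟨?_⟩, ?_, ?_⟩
    · rw [hW2def, Walk.edges_append, List.nodup_append]
      refine ⟨hP.isTrail.edges_nodup, hA2e, ?_⟩
      intro e he1 e' he2 hee; subst hee
      exact hPF e he1 (hA2eC e he2)
    · intro hnil
      have : W2.length = 0 := by rw [hnil]; rfl
      omega
    · have hW2tail : W2.support.tail = P.support.tail ++ A2.support.tail := by
        calc W2.support.tail = (P.support ++ A2.support.tail).tail := by
              rw [hW2def, Walk.support_append]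
          _ = ((x :: P.support.tail) ++ A2.support.tail).tail := by
              rw [← P.support_eq_cons]
          _ = P.support.tail ++ A2.support.tail := by
              rw [List.cons_append, List.tail_cons]
      rw [hW2tail, List.nodup_append]
      refine ⟨hPt, hA2t, ?_⟩
      intro z hz1 z' hz2 hzz; subst hzz
      have hzC : z ∈ C.support := hA2sub z (List.mem_of_mem_tail hz2)
      have hzP : z ∈ P.support := List.mem_of_mem_tail hz1
      rcases hint z hzP hzC with rfl | rfl
      · exact hxPt hz1
      · exact hyA2t hz2
  have h2 : C.length ≤ P.length + A2.length := by
    have := hmin x W2 hW2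
    omega
  -- counting
  set sC := C.support.tail.toFinset with hsCdef
  have hsCcard : sC.card = C.length := by
    rw [hsCdef, List.toFinset_card_of_nodup hC.support_nodup, List.length_tail,
      Walk.length_support]
    omega
  set sP := P.support.toFinset \ sC with hsPdef
  have hPcard : P.support.toFinset.card = P.length + 1 := by
    rw [List.toFinset_card_of_nodup hP.support_nodup, Walk.length_support]
  have hintcard : (P.support.toFinset ∩ sC).card ≤ 2 := by
    have hsub : P.support.toFinset ∩ sC ⊆ {x, y} := by
      intro z hz
      rw [Finset.mem_inter, List.mem_toFinset, hsCdef, List.mem_toFinset] at hz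
      rcases hint z hz.1 (List.mem_of_mem_tail hz.2) with rfl | rfl
      · simp
      · simp
    calc (P.support.toFinset ∩ sC).card ≤ ({x, y} : Finset V).card :=
          Finset.card_le_card hsub
      _ ≤ 2 := Finset.card_insert_le _ _ |>.trans (by simp)
  have hsPcard : P.length - 1 ≤ sP.card := by
    have := Finset.card_sdiff_add_card_inter P.support.toFinset sC
    rw [← hsPdef] at this
    omega
  have hdisjcs : Disjoint sC sP := by
    rw [hsPdef]
    exact Finset.disjoint_sdiff
  have htotal : sC.card + sP.card ≤ Fintype.card V := by
    rw [← Finset.card_union_of_disjoint hdisjcs]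
    exact Finset.card_le_univ _
  omega


end ExcessOneAux

/-- Every n-vertex graph with at least n+1 edges contains a cycle of length
at most 2n/3 + 1. -/
theorem excess_one_short_cycle {V : Type} [Fintype V] [DecidableEq V]
    (G : SimpleGraph V) [DecidableRel G.Adj]
    (h : Fintype.card V + 1 ≤ G.edgeFinset.card) :
    ∃ (v : V) (p : G.Walk v v), p.IsCycle ∧
      (p.length : ℚ) ≤ 2 * (Fintype.card V : ℚ) / 3 + 1 := by
  classical
  open ExcessOneAux in
  have hncard : G.edgeSet.ncard = G.edgeFinset.card := by
    rw [← SimpleGraph.coe_edgeFinset, Set.ncard_coe_finset]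
  have hne : Nonempty V := by
    by_contra hemp
    rw [not_nonempty_iff] at hemp
    have : G.edgeFinset.card = 0 := by
      rw [Finset.card_eq_zero, Finset.eq_empty_iff_forall_notMem]
      intro e he
      induction e with
      | h a b => exact hemp.elim a
    omega
  have hnac : ¬ G.IsAcyclic := by
    apply not_acyclic
    rw [Nat.card_eq_fintype_card, hncard]
    omega
  obtain ⟨c0, C, hC, hgirth⟩ := (SimpleGraph.exists_egirth_eq_length).mpr hnac
  have hmin : ∀ (a : V) (w : G.Walk a a), w.IsCycle → C.length ≤ w.length := by
    intro a w hw
    have h1 : G.egirth ≤ w.length := SimpleGraph.le_egirth.mp le_rfl a w hw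
    rw [hgirth] at h1
    exact_mod_cast h1
  have h3 : 3 * C.length ≤ 2 * Fintype.card V + 2 := by
    by_contra hcon
    have hbad : 2 * Fintype.card V + 2 < 3 * C.length := Nat.not_le.mp hcon
    have hlen3 : 3 ≤ C.length := hC.three_le_length
    -- pick an edge of C and delete it
    have hCedne : C.edges ≠ [] := by
      apply List.ne_nil_of_length_pos
      rw [Walk.length_edges]
      omega
    obtain ⟨e1, he1⟩ := List.exists_mem_of_ne_nil _ hCedne
    have he1G : e1 ∈ G.edgeSet := C.edges_subset_edgeSet he1
    set G' := G.deleteEdges {e1} with hG'def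
    have hle' : G' ≤ G := G.deleteEdges_le _
    have hG'card : G'.edgeSet.ncard = G.edgeFinset.card - 1 := by
      rw [hG'def, SimpleGraph.edgeSet_deleteEdges,
        Set.ncard_diff_singleton_of_mem he1G, hncard]
    have hnac' : ¬ G'.IsAcyclic := by
      apply not_acyclic
      rw [Nat.card_eq_fintype_card, hG'card]
      omega
    rw [SimpleGraph.IsAcyclic] at hnac'
    push_neg at hnac'
    obtain ⟨w0, q', hq'⟩ := hnac'
    set q := q'.mapLe hle' with hqdef
    have hq : q.IsCycle := hq'.mapLe hle'
    have hidf : ⇑(SimpleGraph.Hom.ofLE hle') = id := rfl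
    have hqedges : q.edges = q'.edges := by
      simp only [hqdef, Walk.mapLe, Walk.edges_map, hidf, Sym2.map_id, List.map_id]
    have hqsupp : q.support = q'.support := by
      simp only [hqdef, Walk.mapLe, Walk.support_map, hidf, List.map_id]
    have hqe1 : e1 ∉ q.edges := by
      intro hmem
      rw [hqedges] at hmem
      have h2 := q'.edges_subset_edgeSet hmem
      rw [hG'def, SimpleGraph.edgeSet_deleteEdges] at h2
      exact h2.2 rfl
    have hgq : C.length ≤ q.length := hmin _ q hq
    -- q has an edge outside C
    have hbadq : ∃ e ∈ q.edges, e ∉ C.edges := by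
      by_contra hall
      push_neg at hall
      have hnodupq : q.edges.Nodup := hq.isCircuit.isTrail.edges_nodup
      have hnodupC : C.edges.Nodup := hC.isCircuit.isTrail.edges_nodup
      have hsub : q.edges.toFinset ⊆ C.edges.toFinset.erase e1 := by
        intro e he
        rw [List.mem_toFinset] at he
        rw [Finset.mem_erase, List.mem_toFinset]
        exact ⟨fun hh => hqe1 (hh ▸ he), hall e he⟩
      have hcard := Finset.card_le_card hsub
      rw [List.toFinset_card_of_nodup hnodupq,
        Finset.card_erase_of_mem (List.mem_toFinset.mpr he1),
        List.toFinset_card_of_nodup hnodupC, Walk.length_edges, Walk.length_edges] at hcard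
      omega
    -- predicates for the segment machinery
    set S : Set V := {v | v ∈ C.support} with hSdef
    set F : Set (Sym2 V) := {e | e ∈ C.edges} with hFdef
    have hFS : ∀ e ∈ F, ∀ v, v ∈ e → v ∈ S := by
      intro e he v hv
      induction e with
      | h α β =>
        rw [Sym2.mem_iff] at hv
        rcases hv with rfl | rfl
        · exact C.fst_mem_support_of_mem_edges he
        · exact C.snd_mem_support_of_mem_edges he
    have hFd : ∀ e ∈ F, ¬ e.IsDiag := by
      intro e he
      exact G.not_isDiag_of_mem_edgeSet (C.edges_subset_edgeSet he)
    by_cases hshare : ∃ s, s ∈ q.support ∧ s ∈ C.support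
    · obtain ⟨s, hsq, hsC⟩ := hshare
      set q1 := q.rotate s hsq with hq1def
      have hq1 : q1.IsCycle := hq.rotate hsq
      have hgq1 : C.length ≤ q1.length := hmin _ q1 hq1
      have hq1e : ∀ e, e ∈ q1.edges ↔ e ∈ q.edges :=
        fun e => (Walk.rotate_edges q s hsq).perm.mem_iff
      obtain ⟨u, hadj, r, hq1eq⟩ := Walk.not_nil_iff.mp hq1.not_nil
      have hrpath : r.IsPath := by
        apply Walk.IsPath.mk'
        have h4 := hq1.support_nodup
        rw [hq1eq] at h4
        simpa using h4
      obtain ⟨ebad, hebadq, hebadC⟩ := hbadq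
      have hebadq1 : ebad ∈ q1.edges := (hq1e ebad).mpr hebadq
      obtain ⟨y1, A, R, hy1S, hEq, hA⟩ := exists_firstVisit (· ∈ C.support) r hsC
      have hApath : A.IsPath := by
        have h2 := hrpath
        rw [hEq] at h2
        exact h2.of_append_left
      by_cases hy1s : y1 = s
      · -- B1: q1 meets C only in s
        subst hy1s
        have hRnil : R = Walk.nil := by
          by_contra hR
          have hRnn : ¬ R.Nil := fun hN => hR hN.eq_nil
          have h1 : y1 ∈ R.support.tail := end_mem_tail R hRnn
          have h2 : y1 ∈ A.support := A.end_mem_support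
          have h3 := hrpath.support_nodup
          rw [hEq, Walk.support_append, List.nodup_append] at h3
          exact h3.2.2 _ h2 _ h1 rfl
        have hshared : ∀ z ∈ q1.support, z ∈ C.support → z = y1 := by
          intro z hz hzC
          rw [hq1eq, Walk.support_cons, List.mem_cons] at hz
          rcases hz with rfl | hz
          · rfl
          · rw [hEq, hRnil, Walk.support_append] at hz
            simp only [Walk.support_nil, List.tail_cons, List.append_nil] at hz
            exact hA z hz hzC
        -- counting: shared vertex counted once
        have hsCcard : C.support.tail.toFinset.card = C.length := by
          rw [List.toFinset_card_of_nodup hC.support_nodup, List.length_tail,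
            Walk.length_support]
          omega
        have hsq1card : q1.support.tail.toFinset.card = q1.length := by
          rw [List.toFinset_card_of_nodup hq1.support_nodup, List.length_tail,
            Walk.length_support]
          omega
        have hintersub : C.support.tail.toFinset ∩ q1.support.tail.toFinset ⊆ {y1} := by
          intro z hz
          rw [Finset.mem_inter, List.mem_toFinset, List.mem_toFinset] at hz
          rw [Finset.mem_singleton]
          exact hshared z (List.mem_of_mem_tail hz.2) (List.mem_of_mem_tail hz.1)
        have hintercard : (C.support.tail.toFinset ∩ q1.support.tail.toFinset).card ≤ 1 := by
          calc _ ≤ ({y1} : Finset V).card := Finset.card_le_card hintersub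
            _ = 1 := Finset.card_singleton _
        have huni := Finset.card_union_add_card_inter C.support.tail.toFinset
          q1.support.tail.toFinset
        have huni2 : (C.support.tail.toFinset ∪ q1.support.tail.toFinset).card
            ≤ Fintype.card V := Finset.card_le_univ _
        omega
      · -- there is a theta; two sub-cases according to the first edge of q1
        have hsnA : s ∉ A.support := fun hmem => hy1s ((hA s hmem hsC).symm)
        by_cases hfirst : s(s, u) ∈ C.edges
        · -- first edge lies on C; recurse into r
          have huS : u ∈ C.support := C.snd_mem_support_of_mem_edges hfirst
          have hbadr : ∃ e ∈ r.edges, e ∉ F := by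
            rw [hq1eq, Walk.edges_cons, List.mem_cons] at hebadq1
            rcases hebadq1 with rfl | hmem
            · exact absurd hfirst hebadC
            · exact ⟨ebad, hmem, hebadC⟩
          obtain ⟨x', y', P, hx', hy', hxy', hPp, hPl, hPint, hPFf⟩ :=
            segment hFS hFd r hrpath huS hsC hbadr
          have := theta hC hmin P hx' hy' hxy' hPp hPl hPint hPFf
          omega
        · -- good first segment
          have hP1 : (Walk.cons hadj A).IsPath := hApath.cons hsnA
          have hsy1 : s ≠ y1 := fun hh => hy1s hh.symm
          have hPint : ∀ z ∈ (Walk.cons hadj A).support, z ∈ S → z = s ∨ z = y1 := by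
            intro z hz hzS
            rw [Walk.support_cons, List.mem_cons] at hz
            rcases hz with rfl | hz
            · exact Or.inl rfl
            · exact Or.inr (hA z hz hzS)
          have hPF : ∀ e ∈ (Walk.cons hadj A).edges, e ∉ F := by
            intro e he
            rw [Walk.edges_cons, List.mem_cons] at he
            rcases he with rfl | he
            · exact hfirst
            · exact edges_avoid hFS hFd A hA e he
          have := theta hC hmin (Walk.cons hadj A) hsC hy1S hsy1 hP1 (by simp) hPint hPF
          omega
    · -- disjoint cycles
      push_neg at hshare
      have hsCcard : C.support.tail.toFinset.card = C.length := by
        rw [List.toFinset_card_of_nodup hC.support_nodup, List.length_tail,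
          Walk.length_support]
        omega
      have hsqcard : q.support.tail.toFinset.card = q.length := by
        rw [List.toFinset_card_of_nodup hq.support_nodup, List.length_tail,
          Walk.length_support]
        omega
      have hdisj : Disjoint C.support.tail.toFinset q.support.tail.toFinset := by
        rw [Finset.disjoint_left]
        intro z hz1 hz2
        rw [List.mem_toFinset] at hz1 hz2
        exact hshare z (List.mem_of_mem_tail hz2) (List.mem_of_mem_tail hz1)
      have huni : (C.support.tail.toFinset ∪ q.support.tail.toFinset).card
          ≤ Fintype.card V := Finset.card_le_univ _
      rw [Finset.card_union_of_disjoint hdisj] at huni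
      omega
  refine ⟨c0, C, hC, ?_⟩
  have hq3 : (3 * C.length : ℚ) ≤ 2 * Fintype.card V + 2 := by exact_mod_cast h3
  linarith
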